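/- Let N, n, m, q be natural numbers with n = m + q, q ≥ 1 and N > 2n − m. Let y ∈ ℝ^N, c ∈ ℝ^{m+1}, e ∈ ℝ^{q+1}. Suppose b ∈ ℝ^{q+1}, ŷ ∈ ℝ^N and λ ∈ ℝ^{N−n} satisfy the first-order optimality conditions (with multiplier μ = 0): (i) H_q(ŷ)ᵀ T_{N−n}(c)ᵀ λ = 0, (ii) ŷ − y + T_{N−n}(a)ᵀ λ = 0 where a = c ⋆ b, (iii) T_{N−n}(c) H_q(ŷ) b = 0, and (iv) ⟨b, e⟩ = 1, and assume additionally that rank(T_{N−n}(c) H_q(ŷ)) = q. Then there exists g ∈ ℝ^{N−2n+m} such that λ = T_{N−2n+m}(b)ᵀ g and T_{N−n}(a) y = T_{N−n}(a) T_{N−n}(a)ᵀ T_{N−2n+m}(b)ᵀ g; consequently b is a real eigenvalue of the multiparameter eigenvalue problem A(b) z = 0 with A(b) = [ T_{N−n}(a) y | T_{N−n}(a) T_{N−n}(a)ᵀ T_{N−2n+m}(b)ᵀ ], with eigenvector z = (−1, gᵀ)ᵀ ≠ 0. -/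
import Mathlib


open Matrix

/-- Banded Toeplitz matrix `T_k(a)` of a coefficient vector `a = (a_n, …, a_1, a_0)`:
entry `(i,j)` equals the coefficient `a_{n-(j-i)}` (vector component `j - i`, since
component `t` of the vector is the coefficient `a_{n-t}`) when `0 ≤ j - i ≤ n`, else `0`.
The number of columns is passed explicitly (intended: `N = k + n`). -/
def toep {R : Type*} [Semiring R] (k N n : ℕ) (a : Fin (n + 1) → R) :
    Matrix (Fin k) (Fin N) R :=
  Matrix.of fun i j =>
    if h : i.val ≤ j.val ∧ j.val - i.val ≤ n then a ⟨j.val - i.val, by omega⟩ else 0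

/-- Hankel matrix `H_q(y) ∈ R^{(N-q) × (q+1)}` with entries `(H_q(y))_{i,j} = y_{i+j}` (0-based). -/
def hank {R : Type*} [Semiring R] (N q : ℕ) (y : Fin N → R) :
    Matrix (Fin (N - q)) (Fin (q + 1)) R :=
  Matrix.of fun i j => y ⟨i.val + j.val, by have hi := i.isLt; have hj := j.isLt; omega⟩

/-- Convolution of coefficient vectors: `(c ⋆ b)_k = Σ_{i+j=k} c_i b_j`. -/
def convVec {R : Type*} [Semiring R] (m q : ℕ) (c : Fin (m + 1) → R) (b : Fin (q + 1) → R) :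
    Fin (m + q + 1) → R :=
  fun k => ∑ i : Fin (m + 1), ∑ j : Fin (q + 1), if i.val + j.val = k.val then c i * b j else 0

namespace StmtAux

/-- extension of a finite vector by zero -/
def extv {k : ℕ} (v : Fin k → ℝ) : ℕ → ℝ :=
  fun t => if h : t < k then v ⟨t, h⟩ else 0

lemma extv_eq {k : ℕ} (v : Fin k → ℝ) (i : Fin k) : extv v i.val = v i := by
  simp [extv]

lemma toep_apply_pos {k N n : ℕ} (a : Fin (n + 1) → ℝ) (i : Fin k) (j : Fin N)
    (h : i.val ≤ j.val ∧ j.val - i.val ≤ n) :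
    toep k N n a i j = a ⟨j.val - i.val, by omega⟩ := dif_pos h

lemma toep_apply_neg {k N n : ℕ} (a : Fin (n + 1) → ℝ) (i : Fin k) (j : Fin N)
    (h : ¬(i.val ≤ j.val ∧ j.val - i.val ≤ n)) :
    toep k N n a i j = 0 := dif_neg h

lemma toep_mulVec_apply {k N n : ℕ} (a : Fin (n + 1) → ℝ) (x : Fin N → ℝ) (i : Fin k)
    (h : i.val + n < N) :
    (toep k N n a *ᵥ x) i = ∑ t ∈ Finset.range (n + 1), extv a t * extv x (i.val + t) := by
  have h1 : (toep k N n a *ᵥ x) i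
      = ∑ j ∈ Finset.range N,
          (if i.val ≤ j ∧ j - i.val ≤ n then extv a (j - i.val) else 0) * extv x j := by
    rw [← Fin.sum_univ_eq_sum_range
      (fun j => (if i.val ≤ j ∧ j - i.val ≤ n then extv a (j - i.val) else 0) * extv x j)]
    simp only [Matrix.mulVec, dotProduct]
    refine Finset.sum_congr rfl fun j _ => ?_
    by_cases hc : i.val ≤ j.val ∧ j.val - i.val ≤ n
    · rw [toep_apply_pos a i j hc, if_pos hc, extv, extv,
        dif_pos (show j.val - i.val < n + 1 by omega), dif_pos j.isLt]
    · rw [toep_apply_neg a i j hc, if_neg hc, zero_mul, zero_mul]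
  rw [h1]
  have h2 : ∑ j ∈ Finset.range N,
        (if i.val ≤ j ∧ j - i.val ≤ n then extv a (j - i.val) else 0) * extv x j
      = ∑ j ∈ Finset.Ico i.val (i.val + (n + 1)),
        (if i.val ≤ j ∧ j - i.val ≤ n then extv a (j - i.val) else 0) * extv x j := by
    symm
    apply Finset.sum_subset
    · intro j hj
      rw [Finset.mem_Ico] at hj
      rw [Finset.mem_range]
      omega
    · intro j _ hj2
      rw [Finset.mem_Ico] at hj2
      have hnc : ¬(i.val ≤ j ∧ j - i.val ≤ n) := by omega
      rw [if_neg hnc, zero_mul]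
  rw [h2, Finset.sum_Ico_eq_sum_range, Nat.add_sub_cancel_left]
  refine Finset.sum_congr rfl fun t ht => ?_
  rw [Finset.mem_range] at ht
  rw [if_pos ⟨by omega, by omega⟩]
  congr 2
  omega

lemma hank_mulVec_apply {N q : ℕ} (y : Fin N → ℝ) (b : Fin (q + 1) → ℝ) (i : Fin (N - q)) :
    (hank N q y *ᵥ b) i = ∑ t ∈ Finset.range (q + 1), extv b t * extv y (i.val + t) := by
  rw [← Fin.sum_univ_eq_sum_range (fun t => extv b t * extv y (i.val + t))]
  simp only [Matrix.mulVec, dotProduct, hank, Matrix.of_apply]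
  refine Finset.sum_congr rfl fun t _ => ?_
  have hi := i.isLt
  have ht := t.isLt
  rw [extv, extv, dif_pos t.isLt, dif_pos (show i.val + t.val < N by omega), Fin.eta]
  ring

lemma toep_mulVec_extv {k N n : ℕ} (a : Fin (n + 1) → ℝ) (x : Fin N → ℝ) (p : ℕ)
    (hp : p < k) (h : p + n < N) :
    extv (toep k N n a *ᵥ x) p = ∑ t ∈ Finset.range (n + 1), extv a t * extv x (p + t) := by
  rw [extv, dif_pos hp]
  exact toep_mulVec_apply a x ⟨p, hp⟩ h

lemma hank_mulVec_extv {N q : ℕ} (y : Fin N → ℝ) (b : Fin (q + 1) → ℝ) (p : ℕ)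
    (hp : p < N - q) :
    extv (hank N q y *ᵥ b) p = ∑ t ∈ Finset.range (q + 1), extv b t * extv y (p + t) := by
  rw [extv, dif_pos hp, hank_mulVec_apply]

lemma extv_convVec {m q : ℕ} (c : Fin (m + 1) → ℝ) (b : Fin (q + 1) → ℝ) (u : ℕ) :
    extv (convVec m q c b) u
      = ∑ s ∈ Finset.range (m + 1), ∑ t ∈ Finset.range (q + 1),
          if s + t = u then extv c s * extv b t else 0 := by
  by_cases h : u < m + q + 1
  · rw [extv, dif_pos h]
    rw [← Fin.sum_univ_eq_sum_range
      (fun s => ∑ t ∈ Finset.range (q + 1), if s + t = u then extv c s * extv b t else 0)]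
    show convVec m q c b ⟨u, h⟩ = _
    rw [convVec]
    refine Finset.sum_congr rfl fun s _ => ?_
    rw [← Fin.sum_univ_eq_sum_range
      (fun t => if s.val + t = u then extv c s.val * extv b t else 0)]
    refine Finset.sum_congr rfl fun t _ => ?_
    rw [extv_eq, extv_eq]
  · rw [extv, dif_neg h]
    symm
    refine Finset.sum_eq_zero fun s hs => Finset.sum_eq_zero fun t ht => ?_
    rw [Finset.mem_range] at hs
    rw [Finset.mem_range] at ht
    rw [if_neg (by omega)]

end StmtAux

open StmtAux

/-- Every critical point of the fixed pole problem (with `μ = 0`) at which the filtered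
Hankel matrix has full rank `q` yields a real eigenvalue `b` of the multiparameter
eigenvalue problem `A(b) z = 0`, with
`A(b) = [ T_{N-n}(a) y | T_{N-n}(a) T_{N-n}(a)ᵀ T_{N-2n+m}(b)ᵀ ]` and
eigenvector `z = (-1, gᵀ)ᵀ ≠ 0`, where `λ = T_{N-2n+m}(b)ᵀ g`. -/
theorem stmt1 (N m q : ℕ) (hq : 1 ≤ q) (hN : m + 2 * q < N)
    (y : Fin N → ℝ) (c : Fin (m + 1) → ℝ) (e : Fin (q + 1) → ℝ)
    (b : Fin (q + 1) → ℝ) (yhat : Fin N → ℝ) (lam : Fin (N - (m + q)) → ℝ)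
    (h1 : (hank N q yhat)ᵀ *ᵥ ((toep (N - (m + q)) (N - q) m c)ᵀ *ᵥ lam) = 0)
    (h2 : yhat - y + (toep (N - (m + q)) N (m + q) (convVec m q c b))ᵀ *ᵥ lam = 0)
    (h3 : toep (N - (m + q)) (N - q) m c *ᵥ (hank N q yhat *ᵥ b) = 0)
    (h4 : b ⬝ᵥ e = 1)
    (hrank : (toep (N - (m + q)) (N - q) m c * hank N q yhat).rank = q) :
    ∃ g : Fin (N - (m + 2 * q)) → ℝ,
      lam = (toep (N - (m + 2 * q)) (N - (m + q)) q b)ᵀ *ᵥ g ∧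
      toep (N - (m + q)) N (m + q) (convVec m q c b) *ᵥ y =
        toep (N - (m + q)) N (m + q) (convVec m q c b) *ᵥ
          ((toep (N - (m + q)) N (m + q) (convVec m q c b))ᵀ *ᵥ
            ((toep (N - (m + 2 * q)) (N - (m + q)) q b)ᵀ *ᵥ g)) ∧
      (Matrix.of fun (i : Fin (N - (m + q))) =>
          Fin.cons ((toep (N - (m + q)) N (m + q) (convVec m q c b) *ᵥ y) i)
            (fun j : Fin (N - (m + 2 * q)) =>
              (toep (N - (m + q)) N (m + q) (convVec m q c b) *
                (toep (N - (m + q)) N (m + q) (convVec m q c b))ᵀ *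
                (toep (N - (m + 2 * q)) (N - (m + q)) q b)ᵀ) i j)) *ᵥ
        (Fin.cons (-1) g : Fin (N - (m + 2 * q) + 1) → ℝ) = 0 ∧
      (Fin.cons (-1) g : Fin (N - (m + 2 * q) + 1) → ℝ) ≠ 0 := by
  have hn : m + q < N := by omega
  set A := toep (N - (m + q)) N (m + q) (convVec m q c b) with hAdef
  set C := toep (N - (m + q)) (N - q) m c with hCdef
  set H := hank N q yhat with hHdef
  set B := toep (N - (m + 2 * q)) (N - (m + q)) q b with hBdef
  -- the common double-sum normal form
  have lemA : ∀ p : ℕ,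
      ∑ u ∈ Finset.range (m + q + 1), extv (convVec m q c b) u * extv yhat (p + u)
        = ∑ s ∈ Finset.range (m + 1), ∑ t ∈ Finset.range (q + 1),
            extv c s * extv b t * extv yhat (p + s + t) := by
    intro p
    calc ∑ u ∈ Finset.range (m + q + 1), extv (convVec m q c b) u * extv yhat (p + u)
        = ∑ u ∈ Finset.range (m + q + 1), ∑ s ∈ Finset.range (m + 1),
            ∑ t ∈ Finset.range (q + 1),
            (if s + t = u then extv c s * extv b t * extv yhat (p + u) else 0) := by
          refine Finset.sum_congr rfl fun u _ => ?_
          rw [extv_convVec, Finset.sum_mul]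
          refine Finset.sum_congr rfl fun s _ => ?_
          rw [Finset.sum_mul]
          refine Finset.sum_congr rfl fun t _ => ?_
          rw [ite_mul, zero_mul]
      _ = ∑ s ∈ Finset.range (m + 1), ∑ t ∈ Finset.range (q + 1),
            ∑ u ∈ Finset.range (m + q + 1),
            (if s + t = u then extv c s * extv b t * extv yhat (p + u) else 0) := by
          rw [Finset.sum_comm]
          exact Finset.sum_congr rfl fun s _ => Finset.sum_comm
      _ = ∑ s ∈ Finset.range (m + 1), ∑ t ∈ Finset.range (q + 1),
            extv c s * extv b t * extv yhat (p + s + t) := by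
          refine Finset.sum_congr rfl fun s hs => Finset.sum_congr rfl fun t ht => ?_
          rw [Finset.mem_range] at hs
          rw [Finset.mem_range] at ht
          rw [Finset.sum_ite_eq (Finset.range (m + q + 1)) (s + t)
            (fun u => extv c s * extv b t * extv yhat (p + u)),
            if_pos (Finset.mem_range.mpr (by omega)), ← add_assoc]
  have lemB : ∀ p : ℕ, p + m < N - q →
      ∑ s ∈ Finset.range (m + 1), extv c s * extv (H *ᵥ b) (p + s)
        = ∑ s ∈ Finset.range (m + 1), ∑ t ∈ Finset.range (q + 1),
            extv c s * extv b t * extv yhat (p + s + t) := by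
    intro p hp
    refine Finset.sum_congr rfl fun s hs => ?_
    rw [Finset.mem_range] at hs
    rw [hHdef, hank_mulVec_extv yhat b (p + s) (by omega), Finset.mul_sum]
    refine Finset.sum_congr rfl fun t ht => ?_
    rw [← mul_assoc]
  have hCH : ∀ i : Fin (N - (m + q)), (C *ᵥ (H *ᵥ b)) i
      = ∑ s ∈ Finset.range (m + 1), ∑ t ∈ Finset.range (q + 1),
          extv c s * extv b t * extv yhat (i.val + s + t) := by
    intro i
    have hi := i.isLt
    rw [hCdef, toep_mulVec_apply c (H *ᵥ b) i (by omega)]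
    exact lemB i.val (by omega)
  -- T(a) ŷ = 0
  have hAyhat : A *ᵥ yhat = 0 := by
    funext i
    have hi := i.isLt
    have e1 : (A *ᵥ yhat) i = (C *ᵥ (H *ᵥ b)) i := by
      rw [hAdef, toep_mulVec_apply (convVec m q c b) yhat i (by omega), hCH i]
      exact lemA i.val
    rw [e1, h3]
  -- B (C H) = 0
  have hBM : B * (C * H) = 0 := by
    funext i j
    have hi := i.isLt
    have hj := j.isLt
    have hij : i.val + j.val < N - (m + q) := by omega
    have hcolH : ∀ p : ℕ, p < N - q → extv (fun v => H v j) p = extv yhat (p + j.val) := by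
      intro p hp
      rw [extv, dif_pos hp, extv, dif_pos (show p + j.val < N by omega)]
      rfl
    have ecol : ∀ t ∈ Finset.range (q + 1), extv (fun u => (C * H) u j) (i.val + t)
        = ∑ s ∈ Finset.range (m + 1), extv c s * extv yhat (i.val + t + s + j.val) := by
      intro t ht
      rw [Finset.mem_range] at ht
      have hfun : (fun u => (C * H) u j) = C *ᵥ (fun v => H v j) := rfl
      rw [hfun, hCdef,
        toep_mulVec_extv c (fun v => H v j) (i.val + t) (by omega) (by omega)]
      refine Finset.sum_congr rfl fun s hs => ?_
      rw [Finset.mem_range] at hs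
      rw [hcolH (i.val + t + s) (by omega)]
    have e0 : (B * (C * H)) i j
        = ∑ t ∈ Finset.range (q + 1), extv b t * extv (fun u => (C * H) u j) (i.val + t) := by
      have : (B * (C * H)) i j = (B *ᵥ (fun u => (C * H) u j)) i := rfl
      rw [this, hBdef, toep_mulVec_apply b (fun u => (C * H) u j) i (by omega)]
    have e2 : ∑ t ∈ Finset.range (q + 1), extv b t *
          (∑ s ∈ Finset.range (m + 1), extv c s * extv yhat (i.val + t + s + j.val))
        = ∑ s ∈ Finset.range (m + 1), ∑ t ∈ Finset.range (q + 1),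
            extv c s * extv b t * extv yhat (i.val + j.val + s + t) := by
      simp only [Finset.mul_sum]
      rw [Finset.sum_comm]
      refine Finset.sum_congr rfl fun s _ => Finset.sum_congr rfl fun t _ => ?_
      have hidx : i.val + t + s + j.val = i.val + j.val + s + t := by omega
      rw [hidx]
      ring
    have e3 : (C *ᵥ (H *ᵥ b)) (⟨i.val + j.val, hij⟩ : Fin (N - (m + q)))
        = ∑ s ∈ Finset.range (m + 1), ∑ t ∈ Finset.range (q + 1),
            extv c s * extv b t * extv yhat (i.val + j.val + s + t) :=
      hCH _
    calc (B * (C * H)) i j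
        = ∑ t ∈ Finset.range (q + 1), extv b t *
            extv (fun u => (C * H) u j) (i.val + t) := e0
      _ = ∑ t ∈ Finset.range (q + 1), extv b t *
            (∑ s ∈ Finset.range (m + 1), extv c s * extv yhat (i.val + t + s + j.val)) :=
          Finset.sum_congr rfl fun t ht => by rw [ecol t ht]
      _ = (C *ᵥ (H *ᵥ b)) (⟨i.val + j.val, hij⟩ : Fin (N - (m + q))) := by rw [e2, ← e3]
      _ = (0 : Matrix (Fin (N - (m + 2 * q))) (Fin (q + 1)) ℝ) i j := by rw [h3]; rfl
  -- b ≠ 0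
  have hbne : b ≠ 0 := by
    intro hb0
    rw [hb0, zero_dotProduct] at h4
    norm_num at h4
  -- Bᵀ is injective
  have hinj : ∀ g : Fin (N - (m + 2 * q)) → ℝ, Bᵀ *ᵥ g = 0 → g = 0 := by
    intro g hg0
    by_contra hgne
    have hbs : (Finset.univ.filter fun t : Fin (q + 1) => b t ≠ 0).Nonempty := by
      obtain ⟨t, ht⟩ := Function.ne_iff.mp hbne
      exact ⟨t, Finset.mem_filter.mpr ⟨Finset.mem_univ _, ht⟩⟩
    have hgs : (Finset.univ.filter fun i : Fin (N - (m + 2 * q)) => g i ≠ 0).Nonempty := by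
      obtain ⟨t, ht⟩ := Function.ne_iff.mp hgne
      exact ⟨t, Finset.mem_filter.mpr ⟨Finset.mem_univ _, ht⟩⟩
    set d := (Finset.univ.filter fun t : Fin (q + 1) => b t ≠ 0).max' hbs with hddef
    set i1 := (Finset.univ.filter fun i : Fin (N - (m + 2 * q)) => g i ≠ 0).max' hgs with hi1def
    have hd : b d ≠ 0 :=
      (Finset.mem_filter.mp ((Finset.univ.filter fun t : Fin (q + 1) => b t ≠ 0).max'_mem hbs)).2
    have hgi1 : g i1 ≠ 0 :=
      (Finset.mem_filter.mp
        ((Finset.univ.filter fun i : Fin (N - (m + 2 * q)) => g i ≠ 0).max'_mem hgs)).2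
    have hdmax : ∀ t : Fin (q + 1), b t ≠ 0 → t.val ≤ d.val := by
      intro t ht
      exact Finset.le_max' _ t (Finset.mem_filter.mpr ⟨Finset.mem_univ _, ht⟩)
    have hi1max : ∀ i : Fin (N - (m + 2 * q)), g i ≠ 0 → i.val ≤ i1.val := by
      intro i hi
      exact Finset.le_max' _ i (Finset.mem_filter.mpr ⟨Finset.mem_univ _, hi⟩)
    have hd1 := d.isLt
    have hi1lt := i1.isLt
    have hj0lt : i1.val + d.val < N - (m + q) := by omega
    set j0 : Fin (N - (m + q)) := ⟨i1.val + d.val, hj0lt⟩ with hj0def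
    have hj0 : j0.val = i1.val + d.val := rfl
    have hcond : i1.val ≤ j0.val ∧ j0.val - i1.val ≤ q := ⟨by omega, by omega⟩
    have hB1 : B i1 j0 = b d := by
      rw [hBdef, toep_apply_pos b i1 j0 hcond]
      congr 1
      exact Fin.ext (show j0.val - i1.val = d.val by omega)
    have hterm : ∀ i : Fin (N - (m + 2 * q)), i ≠ i1 → B i j0 * g i = 0 := by
      intro i hne
      by_cases hgi : g i = 0
      · rw [hgi, mul_zero]
      · have hlt : i.val < i1.val := by
          have h1 : i.val ≤ i1.val := hi1max i hgi
          have h2 : i.val ≠ i1.val := fun hh => hne (Fin.ext hh)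
          omega
        by_cases hc : i.val ≤ j0.val ∧ j0.val - i.val ≤ q
        · rw [hBdef, toep_apply_pos b i j0 hc]
          have hb0 : b ⟨j0.val - i.val, by omega⟩ = 0 := by
            by_contra hbb
            have := hdmax _ hbb
            simp only at this
            omega
          rw [hb0, zero_mul]
        · rw [hBdef, toep_apply_neg b i j0 hc, zero_mul]
    have hcontra : b d * g i1 = 0 := by
      calc b d * g i1 = B i1 j0 * g i1 := by rw [hB1]
        _ = ∑ i : Fin (N - (m + 2 * q)), B i j0 * g i :=
            (Fintype.sum_eq_single i1 hterm).symm
        _ = (Bᵀ *ᵥ g) j0 := rfl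
        _ = 0 := by rw [hg0]; rfl
    rcases mul_eq_zero.mp hcontra with h | h
    · exact hd h
    · exact hgi1 h
  -- linear algebra: lam ∈ range Bᵀ
  have hMlam : (C * H)ᵀ *ᵥ lam = 0 := by
    rw [Matrix.transpose_mul, ← Matrix.mulVec_mulVec]
    exact h1
  have hker : lam ∈ LinearMap.ker ((C * H)ᵀ).mulVecLin := by
    rw [LinearMap.mem_ker, Matrix.mulVecLin_apply]
    exact hMlam
  have hle : LinearMap.range (Bᵀ).mulVecLin ≤ LinearMap.ker ((C * H)ᵀ).mulVecLin := by
    rintro x ⟨g, rfl⟩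
    rw [LinearMap.mem_ker, Matrix.mulVecLin_apply, Matrix.mulVecLin_apply,
      Matrix.mulVec_mulVec, ← Matrix.transpose_mul, hBM, Matrix.transpose_zero,
      Matrix.zero_mulVec]
  have hrangeMdim : Module.finrank ℝ (LinearMap.range ((C * H)ᵀ).mulVecLin) = q := by
    have : ((C * H)ᵀ).rank = q := by rw [Matrix.rank_transpose]; exact hrank
    exact this
  have hkerdim : Module.finrank ℝ (LinearMap.ker ((C * H)ᵀ).mulVecLin) = N - (m + 2 * q) := by
    have h := LinearMap.finrank_range_add_finrank_ker ((C * H)ᵀ).mulVecLin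
    rw [Module.finrank_fin_fun, hrangeMdim] at h
    omega
  have hrangeBdim : Module.finrank ℝ (LinearMap.range (Bᵀ).mulVecLin) = N - (m + 2 * q) := by
    have h := LinearMap.finrank_range_add_finrank_ker (Bᵀ).mulVecLin
    have hkb : LinearMap.ker (Bᵀ).mulVecLin = ⊥ := by
      rw [LinearMap.ker_eq_bot']
      intro g hg0
      exact hinj g (by rw [← Matrix.mulVecLin_apply]; exact hg0)
    rw [hkb, finrank_bot, Module.finrank_fin_fun] at h
    omega
  have heq : LinearMap.range (Bᵀ).mulVecLin = LinearMap.ker ((C * H)ᵀ).mulVecLin :=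
    Submodule.eq_of_le_of_finrank_le hle (by rw [hkerdim, hrangeBdim])
  rw [← heq, LinearMap.mem_range] at hker
  obtain ⟨g, hg⟩ := hker
  have hg' : Bᵀ *ᵥ g = lam := by rw [← Matrix.mulVecLin_apply]; exact hg
  -- key identity
  have hy : y = yhat + Aᵀ *ᵥ lam := by
    funext i
    have h2i := congrFun h2 i
    simp only [Pi.add_apply, Pi.sub_apply, Pi.zero_apply] at h2i ⊢
    linarith
  have hkey : A *ᵥ y = A *ᵥ (Aᵀ *ᵥ lam) := by
    rw [hy, Matrix.mulVec_add, hAyhat, zero_add]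
  have hfull : A *ᵥ y = A *ᵥ (Aᵀ *ᵥ (Bᵀ *ᵥ g)) := by rw [hg']; exact hkey
  refine ⟨g, hg'.symm, hfull, ?_, ?_⟩
  · funext i
    simp only [Matrix.mulVec, dotProduct, Matrix.of_apply, Pi.zero_apply]
    rw [Fin.sum_univ_succ]
    simp only [Fin.cons_zero, Fin.cons_succ]
    have e4 : ∑ j : Fin (N - (m + 2 * q)), (A * Aᵀ * Bᵀ) i j * g j
        = (A *ᵥ (Aᵀ *ᵥ (Bᵀ *ᵥ g))) i := by
      rw [Matrix.mulVec_mulVec, Matrix.mulVec_mulVec]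
      rfl
    rw [e4, ← hfull]
    have e5 : (A *ᵥ y) i = ∑ x : Fin N, A i x * y x := rfl
    rw [← e5]
    ring
  · intro hz
    have := congrFun hz 0
    rw [Fin.cons_zero, Pi.zero_apply] at this
    norm_num at this
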